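/- Let λ₁, μ₁, λ₂, μ₂ ∈ ℝ satisfy the Gutiérrez conditions 0 < −λ₂−μ₂ = μ₁ < μ₂ and λ₁+μ₁ > 0. Let χ : ℝ² → {0,1} be any measurable function and set λ(x) := χ(x)λ₁ + (1−χ(x))λ₂ and μ(x) := χ(x)μ₁ + (1−χ(x))μ₂. Then for every continuously differentiable, compactly supported v : ℝ² → ℝ², ∫_{ℝ²} [ λ(x)(div v(x))² + 2μ(x)|e(v)(x)|² ] dx ≥ 0. (In particular the functional coercivity constant Λ(𝕃) of such a two-phase mixture is nonnegative.) -/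

import Mathlib

open Matrix MeasureTheory Metric
open scoped Convolution

noncomputable section

namespace Stmt7Aux

abbrev E2 := Fin 2 → ℝ

lemma cont_dapp {f : E2 → ℝ} (hf : ContDiff ℝ 1 f) (u : E2) :
    Continuous fun x => fderiv ℝ f x u :=
  (hf.continuous_fderiv one_ne_zero).clm_apply continuous_const

lemma cs_dapp {f : E2 → ℝ} (hs : HasCompactSupport f) (u : E2) :
    HasCompactSupport fun x => fderiv ℝ f x u := by
  have := (hs.fderiv (𝕜 := ℝ)).comp_left (g := fun L : E2 →L[ℝ] ℝ => L u) rfl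
  exact this

lemma int_mul {p q : E2 → ℝ} (hp : Continuous p) (hq : Continuous q)
    (hs : HasCompactSupport q) : Integrable (fun x => p x * q x) :=
  (hp.mul hq).integrable_of_hasCompactSupport hs.mul_left

lemma ibp_smooth {f g : E2 → ℝ} (hf : ContDiff ℝ 1 f) (hfs : HasCompactSupport f)
    (hg : ContDiff ℝ 2 g) (hgs : HasCompactSupport g) (u w : E2) :
    ∫ x, fderiv ℝ f x u * fderiv ℝ g x w = ∫ x, fderiv ℝ f x w * fderiv ℝ g x u := by
  have hg1 : ContDiff ℝ 1 g := hg.of_le one_le_two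
  have hgd : Differentiable ℝ g := hg1.differentiable one_ne_zero
  have hfd : Differentiable ℝ f := hf.differentiable one_ne_zero
  have hg' : ContDiff ℝ 1 (fderiv ℝ g) := hg.fderiv_right le_rfl
  have hg'd : Differentiable ℝ (fderiv ℝ g) := hg'.differentiable one_ne_zero
  have A : ∀ u' w' : E2, ∫ x, fderiv ℝ f x u' * fderiv ℝ g x w'
      = - ∫ x, fderiv ℝ (fderiv ℝ g) x u' w' * f x := by
    intro u' w'
    set Gw : E2 → ℝ := fun y => fderiv ℝ g y w' with hGwdef
    have hGwC : ContDiff ℝ 1 Gw := hg'.clm_apply contDiff_const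
    have hGws : HasCompactSupport Gw := cs_dapp hgs w'
    have hGwd : Differentiable ℝ Gw := hGwC.differentiable one_ne_zero
    have hfderivGw : ∀ x, fderiv ℝ Gw x = (fderiv ℝ (fderiv ℝ g) x).flip w' := by
      intro x
      have h := fderiv_clm_apply (c := fderiv ℝ g) (u := fun _ => w') (hg'd x)
        (differentiableAt_const w')
      simpa using h
    have h1 : Integrable (fun x => fderiv ℝ Gw x u' * f x) :=
      int_mul (cont_dapp hGwC u') hf.continuous hfs
    have h2 : Integrable (fun x => Gw x * fderiv ℝ f x u') :=
      int_mul hGwC.continuous (cont_dapp hf u') (cs_dapp hfs u')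
    have h3 : Integrable (fun x => Gw x * f x) := int_mul hGwC.continuous hf.continuous hfs
    have hIBP := integral_mul_fderiv_eq_neg_fderiv_mul_of_integrable h1 h2 h3 (fun x _ => hGwd x)
      (fun x _ => hfd x)
    calc ∫ x, fderiv ℝ f x u' * fderiv ℝ g x w' = ∫ x, Gw x * fderiv ℝ f x u' := by
          congr 1; funext x; exact mul_comm _ _
      _ = - ∫ x, fderiv ℝ Gw x u' * f x := hIBP
      _ = - ∫ x, fderiv ℝ (fderiv ℝ g) x u' w' * f x := by
          have heqf : (fun x => fderiv ℝ Gw x u' * f x)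
              = fun x => fderiv ℝ (fderiv ℝ g) x u' w' * f x := by
            funext x; rw [hfderivGw x]; rfl
          rw [heqf]
  rw [A u w, A w u]
  have hsymm : ∀ x, fderiv ℝ (fderiv ℝ g) x u w = fderiv ℝ (fderiv ℝ g) x w u := fun x =>
    second_derivative_symmetric (fun y => (hgd y).hasFDerivAt) ((hg'd x).hasFDerivAt) u w
  have heqf : (fun x => fderiv ℝ (fderiv ℝ g) x u w * f x)
      = fun x => fderiv ℝ (fderiv ℝ g) x w u * f x := by
    funext x; rw [hsymm x]
  rw [heqf]

lemma key {f g : E2 → ℝ} (hf : ContDiff ℝ 1 f) (hfs : HasCompactSupport f)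
    (hg : ContDiff ℝ 1 g) (hgs : HasCompactSupport g) (u w : E2) :
    ∫ x, fderiv ℝ f x u * fderiv ℝ g x w = ∫ x, fderiv ℝ f x w * fderiv ℝ g x u := by
  set I1 := ∫ x, fderiv ℝ f x u * fderiv ℝ g x w with hI1
  set I2 := ∫ x, fderiv ℝ f x w * fderiv ℝ g x u with hI2
  set C : ℝ := (∫ x, |fderiv ℝ f x u|) + ∫ x, |fderiv ℝ f x w| with hC
  have hpu : Integrable (fun x => |fderiv ℝ f x u|) :=
    ((cont_dapp hf u).integrable_of_hasCompactSupport (cs_dapp hfs u)).abs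
  have hpw : Integrable (fun x => |fderiv ℝ f x w|) :=
    ((cont_dapp hf w).integrable_of_hasCompactSupport (cs_dapp hfs w)).abs
  have hCnn : 0 ≤ C := by
    have h1 : 0 ≤ ∫ x, |fderiv ℝ f x u| := integral_nonneg fun x => abs_nonneg _
    have h2 : 0 ≤ ∫ x, |fderiv ℝ f x w| := integral_nonneg fun x => abs_nonneg _
    linarith
  have main : ∀ ε : ℝ, 0 < ε → |I1 - I2| ≤ ε * C := by
    intro ε hε
    have hGu : UniformContinuous (fun x => fderiv ℝ g x u) :=
      (cs_dapp hgs u).uniformContinuous_of_continuous (cont_dapp hg u)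
    have hGw : UniformContinuous (fun x => fderiv ℝ g x w) :=
      (cs_dapp hgs w).uniformContinuous_of_continuous (cont_dapp hg w)
    rcases Metric.uniformContinuous_iff.mp hGu ε hε with ⟨δ₁, hδ₁, H₁⟩
    rcases Metric.uniformContinuous_iff.mp hGw ε hε with ⟨δ₂, hδ₂, H₂⟩
    set δ := min δ₁ δ₂ with hδdef
    have hδ : 0 < δ := lt_min hδ₁ hδ₂
    set φ : ContDiffBump (0 : E2) := ⟨δ/3, δ/2, by positivity, by linarith⟩ with hφdef
    set L : ℝ →L[ℝ] ℝ →L[ℝ] ℝ := ContinuousLinearMap.lsmul ℝ ℝ with hL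
    set gδ := (φ.normed volume) ⋆[L, volume] g with hgδ
    have hlocg : LocallyIntegrable g volume := hg.continuous.locallyIntegrable
    have hsm : ContDiff ℝ 2 gδ :=
      φ.hasCompactSupport_normed.contDiff_convolution_left L φ.contDiff_normed hlocg
    have hcsδ : HasCompactSupport gδ :=
      HasCompactSupport.convolution (L := L) (μ := volume) φ.hasCompactSupport_normed hgs
    have hlocφ : LocallyIntegrable (φ.normed volume) volume :=
      φ.contDiff_normed (n := 1) |>.continuous.locallyIntegrable
    have hfderivδ : ∀ (w' : E2) (x : E2),
        fderiv ℝ gδ x w' = ((φ.normed volume) ⋆[L, volume] fun y => fderiv ℝ g y w') x := by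
      intro w' x
      rw [(hgs.hasFDerivAt_convolution_right L hlocφ hg x).fderiv]
      exact convolution_precompR_apply L hlocφ (hgs.fderiv (𝕜 := ℝ))
        (hg.continuous_fderiv one_ne_zero) x w'
    have happrox : ∀ (w' : E2), (∀ a b : E2, dist a b < δ →
        dist (fderiv ℝ g a w') (fderiv ℝ g b w') < ε) →
        ∀ x, |fderiv ℝ g x w' - fderiv ℝ gδ x w'| ≤ ε := by
      intro w' H x
      rw [hfderivδ w' x]
      have hd : dist (((φ.normed volume) ⋆[L, volume] fun y => fderiv ℝ g y w') x)
          ((fun y => fderiv ℝ g y w') x) ≤ ε := by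
        apply φ.dist_normed_convolution_le (cont_dapp hg w').aestronglyMeasurable
        intro y hy
        have : dist y x < δ := by
          have := mem_ball.mp hy
          have hlt : φ.rOut = δ/2 := rfl
          rw [hlt] at this
          linarith
        exact (H y x this).le
      rw [dist_eq_norm, Real.norm_eq_abs] at hd
      rw [abs_sub_comm]
      exact hd
    have hau : ∀ x, |fderiv ℝ g x u - fderiv ℝ gδ x u| ≤ ε := by
      apply happrox u
      intro a b hab
      exact H₁ (lt_of_lt_of_le hab (min_le_left _ _))
    have haw : ∀ x, |fderiv ℝ g x w - fderiv ℝ gδ x w| ≤ ε := by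
      apply happrox w
      intro a b hab
      exact H₂ (lt_of_lt_of_le hab (min_le_right _ _))
    -- integrability of all products
    have hcδu : Continuous fun x => fderiv ℝ gδ x u := cont_dapp (hsm.of_le one_le_two) u
    have hcδw : Continuous fun x => fderiv ℝ gδ x w := cont_dapp (hsm.of_le one_le_two) w
    have i1 : Integrable (fun x => fderiv ℝ f x u * fderiv ℝ g x w) :=
      int_mul (cont_dapp hf u) (cont_dapp hg w) (cs_dapp hgs w)
    have i2 : Integrable (fun x => fderiv ℝ f x u * fderiv ℝ gδ x w) :=
      int_mul (cont_dapp hf u) hcδw (cs_dapp hcsδ w)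
    have i3 : Integrable (fun x => fderiv ℝ f x w * fderiv ℝ g x u) :=
      int_mul (cont_dapp hf w) (cont_dapp hg u) (cs_dapp hgs u)
    have i4 : Integrable (fun x => fderiv ℝ f x w * fderiv ℝ gδ x u) :=
      int_mul (cont_dapp hf w) hcδu (cs_dapp hcsδ u)
    have hA := ibp_smooth hf hfs hsm hcsδ u w
    have e1 : ∫ x, fderiv ℝ f x u * (fderiv ℝ g x w - fderiv ℝ gδ x w)
        = I1 - ∫ x, fderiv ℝ f x u * fderiv ℝ gδ x w := by
      rw [hI1, ← integral_sub i1 i2]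
      congr 1; funext x; ring
    have e2 : ∫ x, fderiv ℝ f x w * (fderiv ℝ g x u - fderiv ℝ gδ x u)
        = I2 - ∫ x, fderiv ℝ f x w * fderiv ℝ gδ x u := by
      rw [hI2, ← integral_sub i3 i4]
      congr 1; funext x; ring
    have hsplit : I1 - I2 = (∫ x, fderiv ℝ f x u * (fderiv ℝ g x w - fderiv ℝ gδ x w))
        - ∫ x, fderiv ℝ f x w * (fderiv ℝ g x u - fderiv ℝ gδ x u) := by
      rw [e1, e2, hA]; ring
    -- bound each term
    have hbound : ∀ (u' w' : E2), (∀ x, |fderiv ℝ g x w' - fderiv ℝ gδ x w'| ≤ ε) →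
        |∫ x, fderiv ℝ f x u' * (fderiv ℝ g x w' - fderiv ℝ gδ x w')|
          ≤ ε * ∫ x, |fderiv ℝ f x u'| := by
      intro u' w' hb
      have hcont : Continuous fun x => fderiv ℝ f x u' * (fderiv ℝ g x w' - fderiv ℝ gδ x w') :=
        (cont_dapp hf u').mul ((cont_dapp hg w').sub (cont_dapp (hsm.of_le one_le_two) w'))
      have hint : Integrable
          (fun x => fderiv ℝ f x u' * (fderiv ℝ g x w' - fderiv ℝ gδ x w')) := by
        apply hcont.integrable_of_hasCompactSupport
        exact (cs_dapp hfs u').mul_right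
      have habs : Integrable (fun x => |fderiv ℝ f x u'|) :=
        ((cont_dapp hf u').integrable_of_hasCompactSupport (cs_dapp hfs u')).abs
      calc |∫ x, fderiv ℝ f x u' * (fderiv ℝ g x w' - fderiv ℝ gδ x w')|
          ≤ ∫ x, |fderiv ℝ f x u'| * |fderiv ℝ g x w' - fderiv ℝ gδ x w'| := by
            simpa [Real.norm_eq_abs, abs_mul] using norm_integral_le_integral_norm
              (μ := (volume : Measure E2))
              (f := fun x => fderiv ℝ f x u' * (fderiv ℝ g x w' - fderiv ℝ gδ x w'))
        _ ≤ ∫ x, ε * |fderiv ℝ f x u'| := by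
            apply integral_mono ?_ (habs.const_mul ε) ?_
            · have h := hint.abs
              have heqf : (fun x => |fderiv ℝ f x u' * (fderiv ℝ g x w' - fderiv ℝ gδ x w')|)
                  = fun x => |fderiv ℝ f x u'| * |fderiv ℝ g x w' - fderiv ℝ gδ x w'| := by
                funext x; rw [abs_mul]
              rw [← heqf]; exact h
            · intro x
              exact le_trans (mul_le_mul_of_nonneg_left (hb x) (abs_nonneg _))
                (le_of_eq (mul_comm _ _))
        _ = ε * ∫ x, |fderiv ℝ f x u'| := integral_const_mul ε _
    have b1 := hbound u w haw
    have b2 := hbound w u hau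
    rw [hsplit]
    calc |(∫ x, fderiv ℝ f x u * (fderiv ℝ g x w - fderiv ℝ gδ x w))
        - ∫ x, fderiv ℝ f x w * (fderiv ℝ g x u - fderiv ℝ gδ x u)|
        ≤ |∫ x, fderiv ℝ f x u * (fderiv ℝ g x w - fderiv ℝ gδ x w)|
          + |∫ x, fderiv ℝ f x w * (fderiv ℝ g x u - fderiv ℝ gδ x u)| := abs_sub _ _
      _ ≤ ε * (∫ x, |fderiv ℝ f x u|) + ε * ∫ x, |fderiv ℝ f x w| := add_le_add b1 b2
      _ = ε * C := by rw [hC]; ring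
  have hz : |I1 - I2| ≤ 0 := by
    apply le_of_forall_pos_le_add
    intro ε hε
    have := main (ε / (C + 1)) (by positivity)
    have h2 : ε / (C + 1) * C ≤ ε := by
      rw [div_mul_eq_mul_div, div_le_iff₀ (by linarith)]
      nlinarith
    linarith
  have : I1 - I2 = 0 := abs_eq_zero.mp (le_antisymm hz (abs_nonneg _))
  linarith

end Stmt7Aux

end

open Stmt7Aux

/-- The Jacobian matrix of `v : ℝ² → ℝ²`: `(Dv)_{ij} = ∂v_i/∂x_j`. -/
noncomputable def jacobian (v : (Fin 2 → ℝ) → (Fin 2 → ℝ)) (x : Fin 2 → ℝ) :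
    Matrix (Fin 2) (Fin 2) ℝ :=
  Matrix.of fun i j => fderiv ℝ v x (Pi.single j 1) i

/-- `div v = tr(Dv)`. -/
noncomputable def divg (v : (Fin 2 → ℝ) → (Fin 2 → ℝ)) (x : Fin 2 → ℝ) : ℝ :=
  (jacobian v x).trace

/-- The squared Frobenius norm of the symmetrized gradient `e(v) = (Dv + Dvᵀ)/2`. -/
noncomputable def symGradNormSq (v : (Fin 2 → ℝ) → (Fin 2 → ℝ)) (x : Fin 2 → ℝ) : ℝ :=
  ∑ i, ∑ j, ((jacobian v x i j + jacobian v x j i) / 2) ^ 2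

theorem stmt7 (l1 m1 l2 m2 : ℝ)
    (hpos : 0 < m1) (heq : -l2 - m2 = m1) (hlt : m1 < m2) (hvse : 0 < l1 + m1)
    (χ : (Fin 2 → ℝ) → ℝ) (hχmeas : Measurable χ) (hχ : ∀ x, χ x = 0 ∨ χ x = 1)
    (v : (Fin 2 → ℝ) → (Fin 2 → ℝ))
    (hv : ContDiff ℝ 1 v) (hsupp : HasCompactSupport v) :
    0 ≤ ∫ x : Fin 2 → ℝ,
      ((χ x * l1 + (1 - χ x) * l2) * (divg v x) ^ 2
        + 2 * (χ x * m1 + (1 - χ x) * m2) * symGradNormSq v x) := by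
  classical
  have hvd : Differentiable ℝ v := hv.differentiable one_ne_zero
  set f : Fin 2 → E2 → ℝ := fun i x => v x i with hfdef
  have hfC : ∀ i, ContDiff ℝ 1 (f i) := fun i => contDiff_pi.mp hv i
  have hfs : ∀ i, HasCompactSupport (f i) := fun i =>
    hsupp.comp_left (g := fun y : Fin 2 → ℝ => y i) rfl
  set A : Fin 2 → Fin 2 → E2 → ℝ := fun i j x => fderiv ℝ (f i) x (Pi.single j 1) with hAdef
  have hent : ∀ x i j, jacobian v x i j = A i j x := by
    intro x i j
    have h1 : HasFDerivAt (f i)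
        ((ContinuousLinearMap.proj i : ((Fin 2) → ℝ) →L[ℝ] ℝ).comp (fderiv ℝ v x)) x := by
      exact ((ContinuousLinearMap.proj i : ((Fin 2) → ℝ) →L[ℝ] ℝ).hasFDerivAt).comp x
        (hvd x).hasFDerivAt
    have h2 : fderiv ℝ (f i) x
        = (ContinuousLinearMap.proj i : ((Fin 2) → ℝ) →L[ℝ] ℝ).comp (fderiv ℝ v x) := h1.fderiv
    simp only [hAdef, h2, ContinuousLinearMap.comp_apply, ContinuousLinearMap.proj_apply,
      jacobian, Matrix.of_apply]
  have hdiv : ∀ x, divg v x = A 0 0 x + A 1 1 x := by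
    intro x
    simp [divg, Matrix.trace, Fin.sum_univ_two, hent, Matrix.diag]
  have hsym : ∀ x, symGradNormSq v x
      = (A 0 0 x) ^ 2 + (A 1 1 x) ^ 2 + ((A 0 1 x + A 1 0 x) ^ 2) / 2 := by
    intro x
    simp only [symGradNormSq, Fin.sum_univ_two, hent]
    ring
  have hs0 : ∀ x, 0 ≤ symGradNormSq v x := by
    intro x; rw [hsym x]; positivity
  -- the determinant of the Jacobian
  set D : E2 → ℝ := fun x => A 0 0 x * A 1 1 x - A 0 1 x * A 1 0 x with hDdef
  have hcA : ∀ i j, Continuous (A i j) := fun i j => cont_dapp (hfC i) _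
  have hcsA : ∀ i j, HasCompactSupport (A i j) := fun i j => cs_dapp (hfs i) _
  have hDint : Integrable D := by
    exact (int_mul (hcA 0 0) (hcA 1 1) (hcsA 1 1)).sub (int_mul (hcA 0 1) (hcA 1 0) (hcsA 1 0))
  have hD0 : ∫ x, D x = 0 := by
    have h1 := Stmt7Aux.key (hfC 0) (hfs 0) (hfC 1) (hfs 1) (Pi.single 0 1) (Pi.single 1 1)
    rw [hDdef]
    rw [integral_sub (int_mul (hcA 0 0) (hcA 1 1) (hcsA 1 1))
      (int_mul (hcA 0 1) (hcA 1 0) (hcsA 1 0))]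
    rw [sub_eq_zero]
    exact h1
  -- the integrand
  set G : E2 → ℝ := fun x => (χ x * l1 + (1 - χ x) * l2) * (divg v x) ^ 2
      + 2 * (χ x * m1 + (1 - χ x) * m2) * symGradNormSq v x with hGdef
  have hcontdiv : Continuous (divg v) := by
    have : divg v = fun x => A 0 0 x + A 1 1 x := funext hdiv
    rw [this]; exact (hcA 0 0).add (hcA 1 1)
  have hcontsym : Continuous (symGradNormSq v) := by
    have : symGradNormSq v = fun x =>
        (A 0 0 x) ^ 2 + (A 1 1 x) ^ 2 + ((A 0 1 x + A 1 0 x) ^ 2) / 2 := funext hsym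
    rw [this]
    exact (((hcA 0 0).pow 2).add ((hcA 1 1).pow 2)).add
      ((((hcA 0 1).add (hcA 1 0)).pow 2).div_const 2)
  have hGmeas : AEStronglyMeasurable G volume := by
    apply Measurable.aestronglyMeasurable
    apply Measurable.add
    · exact ((hχmeas.mul_const l1).add ((measurable_const.sub hχmeas).mul_const l2)).mul
        ((hcontdiv.measurable).pow_const 2)
    · exact ((((hχmeas.mul_const m1).add ((measurable_const.sub hχmeas).mul_const m2)).const_mul
        2)).mul hcontsym.measurable
  set Cb : ℝ := |l1| + |l2| + 2 * m2 with hCb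
  set S : E2 → ℝ := fun x => Cb * ((divg v x) ^ 2 + symGradNormSq v x) with hSdef
  have hScs : HasCompactSupport S := by
    have h1 : HasCompactSupport (fun x => (divg v x) ^ 2) := by
      have := ((hcsA 0 0).add (hcsA 1 1)).comp_left (g := fun t : ℝ => t ^ 2) (by simp)
      have heqf : (fun x => (divg v x) ^ 2)
          = (fun t : ℝ => t ^ 2) ∘ (fun x => A 0 0 x + A 1 1 x) := by
        funext x; simp [hdiv x, Function.comp]
      rw [heqf]; exact this
    have h2 : HasCompactSupport (symGradNormSq v) := by
      have hsq : ∀ (i j : Fin 2), HasCompactSupport (fun x => (A i j x) ^ 2) := fun i j =>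
        (hcsA i j).comp_left (g := fun t : ℝ => t ^ 2) (by simp)
      have h3 : HasCompactSupport (fun x => ((A 0 1 x + A 1 0 x) ^ 2) / 2) := by
        have := ((hcsA 0 1).add (hcsA 1 0)).comp_left (g := fun t : ℝ => t ^ 2 / 2) (by simp)
        exact this
      have : HasCompactSupport (fun x =>
          (A 0 0 x) ^ 2 + (A 1 1 x) ^ 2 + ((A 0 1 x + A 1 0 x) ^ 2) / 2) :=
        ((hsq 0 0).add (hsq 1 1)).add h3
      have heqf : symGradNormSq v = fun x =>
          (A 0 0 x) ^ 2 + (A 1 1 x) ^ 2 + ((A 0 1 x + A 1 0 x) ^ 2) / 2 := funext hsym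
      rw [heqf]; exact this
    have := (h1.add h2).mul_left (f := fun _ : E2 => Cb)
    exact this
  have hSint : Integrable S := by
    apply Continuous.integrable_of_hasCompactSupport _ hScs
    exact continuous_const.mul ((hcontdiv.pow 2).add hcontsym)
  have hGint : Integrable G := by
    apply Integrable.mono' hSint hGmeas
    apply ae_of_all
    intro x
    simp only [Real.norm_eq_abs, hGdef, hSdef, hCb]
    have hd2 : 0 ≤ (divg v x) ^ 2 := sq_nonneg _
    have hsx := hs0 x
    have hal1 := le_abs_self l1
    have hal2 := le_abs_self l2
    have hnl1 := neg_abs_le l1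
    have hnl2 := neg_abs_le l2
    have habs1 : (0:ℝ) ≤ |l1| := abs_nonneg _
    have habs2 : (0:ℝ) ≤ |l2| := abs_nonneg _
    rcases hχ x with h | h <;> rw [h] <;> rw [abs_le] <;> constructor <;> nlinarith
  -- pointwise nonnegativity of G + 4 m1 D
  have hl2eq : l2 = -m1 - m2 := by linarith
  have hWnn : ∀ x, 0 ≤ G x + (4 * m1) * D x := by
    intro x
    simp only [hGdef, hDdef]
    rw [hdiv x, hsym x]
    set a := A 0 0 x
    set b := A 0 1 x
    set c := A 1 0 x
    set d := A 1 1 x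
    rcases hχ x with h | h <;> rw [h]
    · rw [hl2eq]
      nlinarith [mul_nonneg (sub_nonneg.mpr hlt.le) (sq_nonneg (a - d)),
        mul_nonneg (sub_nonneg.mpr hlt.le) (sq_nonneg (b + c)),
        mul_nonneg hpos.le (sq_nonneg (b - c))]
    · nlinarith [mul_nonneg (show (0:ℝ) ≤ l1 + 2 * m1 by linarith) (sq_nonneg (a + d)),
        mul_nonneg hpos.le (sq_nonneg (b - c))]
  have hDint4 : Integrable (fun x => (4 * m1) * D x) := hDint.const_mul _
  have hfinal : (0:ℝ) ≤ ∫ x, G x := by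
    have h1 : 0 ≤ ∫ x, (G x + (4 * m1) * D x) := integral_nonneg hWnn
    rw [integral_add hGint hDint4, integral_const_mul, hD0, mul_zero, add_zero] at h1
    exact h1
  exact hfinal
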